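/- There exists a constant c₁ > 1, depending only on d and α, such that for all r ≥ 1, c₁^{-1} e^{-r} r^{(d+α-1)/2} ≤ ψ(r) ≤ c₁ e^{-r} r^{(d+α-1)/2}. -/

import Mathlib

open MeasureTheory Real Set

/-- `ψ(r) = 2^{-(d+α)} Γ((d+α)/2)^{-1} ∫_0^∞ s^{(d+α)/2-1} e^{-s/4 - r²/s} ds`. -/
noncomputable def psiFn (d : ℕ) (α r : ℝ) : ℝ :=
  (2 : ℝ) ^ (-((d : ℝ) + α)) / Real.Gamma (((d : ℝ) + α) / 2) *
    ∫ s in Set.Ioi (0 : ℝ), s ^ (((d : ℝ) + α) / 2 - 1) * Real.exp (-s / 4 - r ^ 2 / s)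


lemma psiAux_integrableOn_rpow_exp (ν : ℝ) (hν : 0 < ν) (b : ℝ) (hb : 0 < b) :
    IntegrableOn (fun s : ℝ => s ^ (ν - 1) * Real.exp (-b * s)) (Ioi 0) := by
  have h := integrableOn_rpow_mul_exp_neg_mul_rpow (s := ν - 1) (p := 1)
    (b := b) (by linarith) zero_lt_one hb
  refine h.congr_fun (fun x hx => ?_) measurableSet_Ioi
  simp only [Real.rpow_one, pow_one]

lemma psiAux_meas (ν r : ℝ) :
    AEStronglyMeasurable (fun s : ℝ => s ^ (ν - 1) * Real.exp (-s / 4 - r ^ 2 / s))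
      (volume.restrict (Ioi 0)) := by
  apply AEMeasurable.aestronglyMeasurable
  fun_prop

lemma psiAux_F_integrable (ν : ℝ) (hν : 0 < ν) (r : ℝ) :
    IntegrableOn (fun s : ℝ => s ^ (ν - 1) * Real.exp (-s / 4 - r ^ 2 / s)) (Ioi 0) := by
  refine (psiAux_integrableOn_rpow_exp ν hν (1/4) (by norm_num)).mono' (psiAux_meas ν r) ?_
  rw [ae_restrict_iff' measurableSet_Ioi]
  filter_upwards with s hs
  have hs0 : (0:ℝ) < s := hs
  have h1 : (0:ℝ) ≤ s ^ (ν - 1) := Real.rpow_nonneg hs0.le _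
  rw [norm_mul, Real.norm_eq_abs, Real.norm_eq_abs, abs_of_nonneg h1,
    abs_of_nonneg (Real.exp_pos _).le]
  apply mul_le_mul_of_nonneg_left _ h1
  apply Real.exp_le_exp.mpr
  have : 0 ≤ r ^ 2 / s := by positivity
  linarith

lemma psiAux_identity (r s : ℝ) (hs : 0 < s) :
    -s / 4 - r ^ 2 / s = -r - (s - 2 * r) ^ 2 / (4 * s) := by
  field_simp
  ring

lemma psiAux_lower (ν : ℝ) (hν : 1 < ν) (r : ℝ) (hr : 1 ≤ r) :
    2 ^ (ν - 1) * Real.exp (-(1:ℝ)/8) * (Real.exp (-r) * r ^ (ν - 1/2)) ≤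
      ∫ s in Ioi (0:ℝ), s ^ (ν - 1) * Real.exp (-s / 4 - r ^ 2 / s) := by
  have hr0 : (0:ℝ) < r := by linarith
  have hsq : (0:ℝ) ≤ Real.sqrt r := Real.sqrt_nonneg r
  set J : Set ℝ := Ioc (2*r) (2*r + Real.sqrt r) with hJ
  have hJsub : J ⊆ Ioi 0 := fun x hx => lt_trans (by linarith) hx.1
  have hint := psiAux_F_integrable ν (by linarith) r
  have hintJ : IntegrableOn (fun s : ℝ => s ^ (ν - 1) * Real.exp (-s / 4 - r ^ 2 / s)) J :=
    hint.mono_set hJsub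
  have hnonneg : 0 ≤ᵐ[volume.restrict (Ioi (0:ℝ))]
      (fun s : ℝ => s ^ (ν - 1) * Real.exp (-s / 4 - r ^ 2 / s)) := by
    filter_upwards [ae_restrict_mem measurableSet_Ioi] with s hs
    have : (0:ℝ) < s := hs
    positivity
  have hmono : ∫ s in J, s ^ (ν - 1) * Real.exp (-s / 4 - r ^ 2 / s) ≤
      ∫ s in Ioi (0:ℝ), s ^ (ν - 1) * Real.exp (-s / 4 - r ^ 2 / s) :=
    setIntegral_mono_set hint hnonneg (Filter.Eventually.of_forall hJsub)
  have hconst : ((2*r) ^ (ν - 1) * Real.exp (-r - 1/8)) * (volume J).toReal ≤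
      ∫ s in J, s ^ (ν - 1) * Real.exp (-s / 4 - r ^ 2 / s) := by
    refine le_trans (le_of_eq ?e) (setIntegral_ge_of_const_le
      (c := (2*r) ^ (ν - 1) * Real.exp (-r - 1/8)) measurableSet_Ioc (by simp [hJ]) ?_ hintJ)
    case e => simp only [smul_eq_mul, Measure.real]; ring
    intro s hsJ
    have hs1 : 2*r < s := hsJ.1
    have hs2 : s ≤ 2*r + Real.sqrt r := hsJ.2
    have hs0 : 0 < s := by linarith
    rw [psiAux_identity r s hs0]
    have h1 : (2*r) ^ (ν - 1) ≤ s ^ (ν - 1) :=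
      Real.rpow_le_rpow (by linarith) hs1.le (by linarith)
    have h2 : Real.exp (-r - 1/8) ≤ Real.exp (-r - (s - 2*r)^2 / (4*s)) := by
      apply Real.exp_le_exp.mpr
      have hq : (s - 2*r)^2 / (4*s) ≤ 1/8 := by
        have hb : (s - 2*r)^2 ≤ r := by
          have h0 : 0 ≤ s - 2*r := by linarith
          calc (s - 2*r)^2 ≤ (Real.sqrt r)^2 := by
                apply pow_le_pow_left₀ h0 (by linarith)
            _ = r := Real.sq_sqrt hr0.le
        calc (s - 2*r)^2 / (4*s) ≤ r / (8*r) := by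
              apply div_le_div₀ (by linarith) hb (by linarith) (by linarith)
          _ = 1/8 := by field_simp
      linarith
    exact mul_le_mul h1 h2 (Real.exp_pos _).le (Real.rpow_nonneg hs0.le _)
  have hvol : (volume J).toReal = Real.sqrt r := by
    rw [hJ, Real.volume_Ioc, ENNReal.toReal_ofReal (by linarith)]
    ring_nf
  rw [hvol] at hconst
  refine le_trans (le_of_eq ?_) (hconst.trans hmono)
  rw [Real.mul_rpow (by norm_num) hr0.le, Real.exp_sub, Real.sqrt_eq_rpow]
  rw [show (-r - 1/8 : ℝ) = -r + -(1/8) by ring, Real.exp_add] at *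
  rw [show ν - 1/2 = (ν - 1) + 1/2 by ring, Real.rpow_add hr0]
  rw [show (-1/8 : ℝ) = -(1/8) by norm_num, Real.exp_neg]
  ring

lemma psiAux_upper (ν : ℝ) (hν : 1 < ν) :
    ∃ C : ℝ, 0 < C ∧ ∀ r : ℝ, 1 ≤ r →
      (∫ s in Ioi (0:ℝ), s ^ (ν - 1) * Real.exp (-s / 4 - r ^ 2 / s)) ≤
        C * (Real.exp (-r) * r ^ (ν - 1/2)) := by
  have hpi : (0:ℝ) < π := Real.pi_pos
  set C₂ : ℝ := ∫ s in Ioi (0:ℝ), s ^ (ν - 1) * Real.exp (-(1/8) * s) with hC2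
  have hC2nn : 0 ≤ C₂ := by
    apply setIntegral_nonneg measurableSet_Ioi
    intro s hs
    have : (0:ℝ) < s := hs
    positivity
  refine ⟨8 ^ (ν - 1) * Real.sqrt (32 * π) + C₂, by positivity, fun r hr => ?_⟩
  have hr0 : (0:ℝ) < r := by linarith
  have hsplit : (Ioc (0:ℝ) (8*r)) ∪ Ioi (8*r) = Ioi (0:ℝ) :=
    Ioc_union_Ioi_eq_Ioi (by linarith)
  have hint := psiAux_F_integrable ν (by linarith) r
  have hint1 : IntegrableOn (fun s : ℝ => s ^ (ν - 1) * Real.exp (-s / 4 - r ^ 2 / s))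
      (Ioc (0:ℝ) (8*r)) := hint.mono_set (by rw [← hsplit]; exact subset_union_left)
  have hint2 : IntegrableOn (fun s : ℝ => s ^ (ν - 1) * Real.exp (-s / 4 - r ^ 2 / s))
      (Ioi (8*r)) := hint.mono_set (by rw [← hsplit]; exact subset_union_right)
  have heq : (∫ s in Ioi (0:ℝ), s ^ (ν - 1) * Real.exp (-s / 4 - r ^ 2 / s)) =
      (∫ s in Ioc (0:ℝ) (8*r), s ^ (ν - 1) * Real.exp (-s / 4 - r ^ 2 / s)) +
      (∫ s in Ioi (8*r), s ^ (ν - 1) * Real.exp (-s / 4 - r ^ 2 / s)) := by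
    rw [← hsplit, setIntegral_union (Ioc_disjoint_Ioi le_rfl) measurableSet_Ioi hint1 hint2]
  -- Gaussian integrability
  have hb : (0:ℝ) < (32*r)⁻¹ := by positivity
  have hgauss_int : Integrable (fun s : ℝ => Real.exp (-(32*r)⁻¹ * (s - 2*r)^2)) :=
    (integrable_exp_neg_mul_sq hb).comp_sub_right (2*r)
  -- Term 1
  have hT1 : (∫ s in Ioc (0:ℝ) (8*r), s ^ (ν - 1) * Real.exp (-s / 4 - r ^ 2 / s)) ≤
      8 ^ (ν - 1) * Real.sqrt (32 * π) * (Real.exp (-r) * r ^ (ν - 1/2)) := by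
    have step1 : (∫ s in Ioc (0:ℝ) (8*r), s ^ (ν - 1) * Real.exp (-s / 4 - r ^ 2 / s)) ≤
        ∫ s in Ioc (0:ℝ) (8*r),
          (8*r) ^ (ν - 1) * Real.exp (-r) * Real.exp (-(32*r)⁻¹ * (s - 2*r)^2) := by
      apply setIntegral_mono_on hint1 ((hgauss_int.const_mul _).integrableOn) measurableSet_Ioc
      intro s hs
      have hs0 : (0:ℝ) < s := hs.1
      have hs8 : s ≤ 8*r := hs.2
      rw [psiAux_identity r s hs0]
      have h1 : s ^ (ν - 1) ≤ (8*r) ^ (ν - 1) :=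
        Real.rpow_le_rpow hs0.le hs8 (by linarith)
      have h2 : Real.exp (-r - (s - 2*r)^2 / (4*s)) ≤
          Real.exp (-r) * Real.exp (-(32*r)⁻¹ * (s - 2*r)^2) := by
        rw [← Real.exp_add]
        apply Real.exp_le_exp.mpr
        have key : (s - 2*r)^2 / (32*r) ≤ (s - 2*r)^2 / (4*s) :=
          div_le_div_of_nonneg_left (sq_nonneg _) (by positivity) (by linarith)
        have h3 : -(32*r)⁻¹ * (s - 2*r)^2 = -((s - 2*r)^2 / (32*r)) := by ring
        linarith [key, h3]
      calc s ^ (ν - 1) * Real.exp (-r - (s - 2*r)^2 / (4*s))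
          ≤ (8*r) ^ (ν - 1) * (Real.exp (-r) * Real.exp (-(32*r)⁻¹ * (s - 2*r)^2)) :=
            mul_le_mul h1 h2 (Real.exp_pos _).le (Real.rpow_nonneg (by linarith) _)
        _ = (8*r) ^ (ν - 1) * Real.exp (-r) * Real.exp (-(32*r)⁻¹ * (s - 2*r)^2) := by ring
    have step2 : (∫ s in Ioc (0:ℝ) (8*r),
          (8*r) ^ (ν - 1) * Real.exp (-r) * Real.exp (-(32*r)⁻¹ * (s - 2*r)^2)) ≤
        (8*r) ^ (ν - 1) * Real.exp (-r) * Real.sqrt (π * (32*r)) := by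
      rw [integral_const_mul]
      apply mul_le_mul_of_nonneg_left _ (by positivity)
      have hle : (∫ s in Ioc (0:ℝ) (8*r), Real.exp (-(32*r)⁻¹ * (s - 2*r)^2)) ≤
          ∫ s : ℝ, Real.exp (-(32*r)⁻¹ * (s - 2*r)^2) :=
        setIntegral_le_integral hgauss_int
          (Filter.Eventually.of_forall fun s => (Real.exp_pos _).le)
      have heval : (∫ s : ℝ, Real.exp (-(32*r)⁻¹ * (s - 2*r)^2)) = Real.sqrt (π * (32*r)) := by
        rw [integral_sub_right_eq_self (fun y => Real.exp (-(32*r)⁻¹ * y^2)) (2*r),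
          integral_gaussian]
        rw [show π / (32*r)⁻¹ = π * (32*r) by field_simp]
      linarith
    have halg : (8*r) ^ (ν - 1) * Real.exp (-r) * Real.sqrt (π * (32*r)) =
        8 ^ (ν - 1) * Real.sqrt (32 * π) * (Real.exp (-r) * r ^ (ν - 1/2)) := by
      rw [Real.mul_rpow (by norm_num) hr0.le,
        show π * (32*r) = (32 * π) * r by ring,
        Real.sqrt_mul (by positivity) r,
        show ν - 1/2 = (ν - 1) + 1/2 by ring, Real.rpow_add hr0]
      simp only [Real.sqrt_eq_rpow]
      ring
    calc (∫ s in Ioc (0:ℝ) (8*r), s ^ (ν - 1) * Real.exp (-s / 4 - r ^ 2 / s))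
        ≤ (8*r) ^ (ν - 1) * Real.exp (-r) * Real.sqrt (π * (32*r)) := step1.trans step2
      _ = _ := halg
  -- Term 2
  have hT2 : (∫ s in Ioi (8*r), s ^ (ν - 1) * Real.exp (-s / 4 - r ^ 2 / s)) ≤
      Real.exp (-r) * C₂ := by
    have hint8 : IntegrableOn (fun s : ℝ => s ^ (ν - 1) * Real.exp (-(1/8) * s)) (Ioi 0) :=
      psiAux_integrableOn_rpow_exp ν (by linarith) (1/8) (by norm_num)
    have step1 : (∫ s in Ioi (8*r), s ^ (ν - 1) * Real.exp (-s / 4 - r ^ 2 / s)) ≤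
        ∫ s in Ioi (8*r), Real.exp (-r) * (s ^ (ν - 1) * Real.exp (-(1/8) * s)) := by
      apply setIntegral_mono_on hint2
        (((hint8.mono_set (Ioi_subset_Ioi (by linarith))).const_mul _)) measurableSet_Ioi
      intro s hs
      have hs8 : 8*r < s := hs
      have hs0 : (0:ℝ) < s := by linarith
      have hexp : -s/4 - r^2/s ≤ -r + (-(1/8)*s) := by
        have h1 : 0 ≤ r^2/s := by positivity
        linarith
      calc s ^ (ν - 1) * Real.exp (-s / 4 - r ^ 2 / s)
          ≤ s ^ (ν - 1) * Real.exp (-r + (-(1/8)*s)) :=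
            mul_le_mul_of_nonneg_left (Real.exp_le_exp.mpr hexp) (Real.rpow_nonneg hs0.le _)
        _ = Real.exp (-r) * (s ^ (ν - 1) * Real.exp (-(1/8) * s)) := by
            rw [Real.exp_add]; ring
    have step2 : (∫ s in Ioi (8*r), Real.exp (-r) * (s ^ (ν - 1) * Real.exp (-(1/8) * s))) ≤
        Real.exp (-r) * C₂ := by
      rw [integral_const_mul]
      apply mul_le_mul_of_nonneg_left _ (Real.exp_pos _).le
      apply setIntegral_mono_set hint8
      · filter_upwards [ae_restrict_mem measurableSet_Ioi] with s hs
        have : (0:ℝ) < s := hs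
        positivity
      · exact Filter.Eventually.of_forall (Ioi_subset_Ioi (by linarith))
    exact step1.trans step2
  have hfin : Real.exp (-r) * C₂ ≤ C₂ * (Real.exp (-r) * r ^ (ν - 1/2)) := by
    have h1 : (1:ℝ) ≤ r ^ (ν - 1/2) := Real.one_le_rpow hr (by linarith)
    nlinarith [Real.exp_pos (-r), mul_nonneg hC2nn (Real.exp_pos (-r)).le]
  rw [heq]
  have := add_le_add hT1 hT2
  refine this.trans ?_
  have := add_le_add (le_refl (8 ^ (ν - 1) * Real.sqrt (32 * π) * (Real.exp (-r) * r ^ (ν - 1/2)))) hfin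
  refine this.trans (le_of_eq ?_)
  ring

/-- There is `c₁ > 1` depending only on `d` and `α` with
`c₁⁻¹ e^{-r} r^{(d+α-1)/2} ≤ ψ(r) ≤ c₁ e^{-r} r^{(d+α-1)/2}` for all `r ≥ 1`. -/
theorem psiFn_asymptotics (d : ℕ) (hd : 2 ≤ d) (α : ℝ) (hα₀ : 0 < α) (hα₂ : α < 2) :
    ∃ c₁ : ℝ, 1 < c₁ ∧ ∀ r : ℝ, 1 ≤ r →
      c₁⁻¹ * (Real.exp (-r) * r ^ (((d : ℝ) + α - 1) / 2)) ≤ psiFn d α r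
        ∧ psiFn d α r ≤ c₁ * (Real.exp (-r) * r ^ (((d : ℝ) + α - 1) / 2)) := by
  have hd2 : (2:ℝ) ≤ (d:ℝ) := by exact_mod_cast hd
  set ν : ℝ := ((d:ℝ) + α) / 2 with hνdef
  have hν : 1 < ν := by rw [hνdef]; linarith
  set K : ℝ := (2 : ℝ) ^ (-((d : ℝ) + α)) / Real.Gamma ν with hKdef
  have hK : 0 < K := div_pos (Real.rpow_pos_of_pos two_pos _)
    (Real.Gamma_pos_of_pos (by linarith))
  obtain ⟨Cu, hCu, hup⟩ := psiAux_upper ν hν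
  set cl : ℝ := K * (2 ^ (ν - 1) * Real.exp (-(1:ℝ)/8)) with hcldef
  have hcl : 0 < cl := by
    apply mul_pos hK (mul_pos (Real.rpow_pos_of_pos two_pos _) (Real.exp_pos _))
  set c₁ : ℝ := 2 + cl⁻¹ + K * Cu with hc1def
  have hKCu : 0 < K * Cu := mul_pos hK hCu
  have hc1 : 1 < c₁ := by
    have : 0 < cl⁻¹ := inv_pos.mpr hcl
    rw [hc1def]; linarith
  refine ⟨c₁, hc1, fun r hr => ?_⟩
  have hr0 : (0:ℝ) < r := by linarith
  have hexp : ((d:ℝ) + α - 1)/2 = ν - 1/2 := by rw [hνdef]; ring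
  have hE : 0 ≤ Real.exp (-r) * r ^ (ν - 1/2) := by positivity
  have hpsi : psiFn d α r =
      K * ∫ s in Ioi (0:ℝ), s ^ (ν - 1) * Real.exp (-s / 4 - r ^ 2 / s) := by
    rw [psiFn, hKdef, hνdef]
  rw [hexp]
  constructor
  · have h1 : c₁⁻¹ ≤ cl := by
      rw [← inv_inv cl]
      apply inv_anti₀ (inv_pos.mpr hcl)
      rw [hc1def]; linarith
    calc c₁⁻¹ * (Real.exp (-r) * r ^ (ν - 1/2))
        ≤ cl * (Real.exp (-r) * r ^ (ν - 1/2)) := mul_le_mul_of_nonneg_right h1 hE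
      _ = K * (2 ^ (ν - 1) * Real.exp (-(1:ℝ)/8) * (Real.exp (-r) * r ^ (ν - 1/2))) := by
          rw [hcldef]; ring
      _ ≤ K * ∫ s in Ioi (0:ℝ), s ^ (ν - 1) * Real.exp (-s / 4 - r ^ 2 / s) :=
          mul_le_mul_of_nonneg_left (psiAux_lower ν hν r hr) hK.le
      _ = psiFn d α r := hpsi.symm
  · calc psiFn d α r
        = K * ∫ s in Ioi (0:ℝ), s ^ (ν - 1) * Real.exp (-s / 4 - r ^ 2 / s) := hpsi
      _ ≤ K * (Cu * (Real.exp (-r) * r ^ (ν - 1/2))) :=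
          mul_le_mul_of_nonneg_left (hup r hr) hK.le
      _ = (K * Cu) * (Real.exp (-r) * r ^ (ν - 1/2)) := by ring
      _ ≤ c₁ * (Real.exp (-r) * r ^ (ν - 1/2)) := by
          apply mul_le_mul_of_nonneg_right _ hE
          have : 0 < cl⁻¹ := inv_pos.mpr hcl
          rw [hc1def]; linarith
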